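/- Let 𝓗 be a finite nonempty family of finite simple graphs with γ_𝓗 ≥ 1, and let n ≥ γ_𝓗 be a positive integer. Then spex(n, 𝓗_sub) ≥ √(γ_𝓗 (n − γ_𝓗)). -/

import Mathlib

open Matrix

namespace SubdivPaper

/-- A vertex set is independent in `G`. -/
def IsIndep {V : Type*} (G : SimpleGraph V) (s : Set V) : Prop :=
  s.Pairwise fun u v => ¬ G.Adj u v

/-- The independence number `α(G)` of a finite graph `G`. -/
noncomputable def indepNum {V : Type*} [Fintype V] (G : SimpleGraph V) : ℕ :=
  sSup {k : ℕ | ∃ s : Finset V, IsIndep G ↑s ∧ s.card = k}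

/-- `γ_H := |V(H)| - α(H) - 1`. -/
noncomputable def gammaOf {V : Type*} [Fintype V] (G : SimpleGraph V) : ℕ :=
  Fintype.card V - indepNum G - 1

/-- The set of internal vertices of a walk (support minus the two endpoints). -/
def WalkInternal {V : Type*} {G : SimpleGraph V} {a b : V} (p : G.Walk a b) : Set V :=
  {w | w ∈ p.support ∧ w ≠ a ∧ w ≠ b}

/-- `G` contains a subdivision of `H`: there are an injective map `φ` on vertices and,
for each edge `uv` of `H`, a path in `G` joining `φ u` and `φ v`, such that these paths are
pairwise internally vertex-disjoint and no internal vertex lies in the image of `φ`. -/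
def ContainsSubdiv {V W : Type*} (G : SimpleGraph V) (H : SimpleGraph W) : Prop :=
  ∃ φ : W → V, Function.Injective φ ∧
    ∃ P : ∀ ⦃u v : W⦄, H.Adj u v → G.Walk (φ u) (φ v),
      (∀ ⦃u v : W⦄ (h : H.Adj u v), (P h).IsPath) ∧
      (∀ ⦃u v : W⦄ (h : H.Adj u v), P h.symm = (P h).reverse) ∧
      (∀ ⦃u v : W⦄ (h : H.Adj u v), ∀ w ∈ WalkInternal (P h), w ∉ Set.range φ) ∧
      (∀ ⦃u v u' v' : W⦄ (h : H.Adj u v) (h' : H.Adj u' v'),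
        s(u, v) ≠ s(u', v') → WalkInternal (P h) ∩ WalkInternal (P h') = ∅)

variable {ι : Type*}

/-- `G` is `𝓗`-subdivision-free. -/
def SubdivFreeFam (m : ι → ℕ) (ℋ : ∀ i, SimpleGraph (Fin (m i)))
    {V : Type*} (G : SimpleGraph V) : Prop :=
  ∀ i, ¬ ContainsSubdiv G (ℋ i)

/-- `γ_𝓗 := min_{H ∈ 𝓗} γ_H`. -/
noncomputable def gammaFam (m : ι → ℕ) (ℋ : ∀ i, SimpleGraph (Fin (m i))) : ℕ :=
  sInf {g : ℕ | ∃ i, gammaOf (ℋ i) = g}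

open Classical in
/-- The real adjacency matrix of a graph on `Fin n`. -/
noncomputable def adjMat {n : ℕ} (G : SimpleGraph (Fin n)) : Matrix (Fin n) (Fin n) ℝ :=
  Matrix.of fun u v => if G.Adj u v then (1 : ℝ) else 0

/-- The spectral radius: the largest eigenvalue of the adjacency matrix. -/
noncomputable def specRad {n : ℕ} (G : SimpleGraph (Fin n)) : ℝ :=
  sSup {t : ℝ | ∃ x : Fin n → ℝ, x ≠ 0 ∧ adjMat G *ᵥ x = t • x}

/-- `spex(n, 𝓗_sub)`. -/
noncomputable def spex (n : ℕ) (m : ι → ℕ) (ℋ : ∀ i, SimpleGraph (Fin (m i))) : ℝ :=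
  sSup {ρ : ℝ | ∃ G : SimpleGraph (Fin n), SubdivFreeFam m ℋ G ∧ specRad G = ρ}

/-- `SPEX(n, 𝓗_sub)`: the `n`-vertex `𝓗`-subdivision-free graphs of maximum spectral radius. -/
def SPEX (n : ℕ) (m : ι → ℕ) (ℋ : ∀ i, SimpleGraph (Fin (m i))) :
    Set (SimpleGraph (Fin n)) :=
  {G | SubdivFreeFam m ℋ G ∧
    ∀ G' : SimpleGraph (Fin n), SubdivFreeFam m ℋ G' → specRad G' ≤ specRad G}

/-- The generalized book `B_{s,t} = K_s ∨ (t K_1)`. -/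
def book (s t : ℕ) : SimpleGraph (Fin (s + t)) :=
  SimpleGraph.fromRel fun u v => (u : ℕ) < s ∨ (v : ℕ) < s

/-- `G` contains a spanning subgraph isomorphic to `B`. -/
def HasSpanningSubgraphIso {V W : Type*} (G : SimpleGraph V) (B : SimpleGraph W) : Prop :=
  ∃ f : W ≃ V, ∀ u v : W, B.Adj u v → G.Adj (f u) (f v)

/-- The graph obtained from `G` by adding the edge `uv`. -/
def addEdge {V : Type*} (G : SimpleGraph V) (u v : V) : SimpleGraph V :=
  G ⊔ SimpleGraph.fromEdgeSet {s(u, v)}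

/-- `G` is `𝓗`-subdivision-saturated. -/
def SubdivSatFam (m : ι → ℕ) (ℋ : ∀ i, SimpleGraph (Fin (m i)))
    {V : Type*} (G : SimpleGraph V) : Prop :=
  SubdivFreeFam m ℋ G ∧
    ∀ u v : V, u ≠ v → ¬ G.Adj u v → ∃ i, ContainsSubdiv (addEdge G u v) (ℋ i)

/-- `max_{H ∈ 𝓗} |V(H)|`. -/
noncomputable def maxOrderFam (m : ι → ℕ) : ℕ := sSup (Set.range m)

/-- The minimum order of a graph `H ∈ 𝓗` with `γ_H = γ_𝓗` (the order of a minimal graph). -/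
noncomputable def minOrderAtGamma (m : ι → ℕ) (ℋ : ∀ i, SimpleGraph (Fin (m i))) : ℕ :=
  sInf {k : ℕ | ∃ i, gammaOf (ℋ i) = gammaFam m ℋ ∧ m i = k}

/-- `α_𝓗`: the independence number of a minimal graph with respect to `𝓗`. -/
noncomputable def alphaFam (m : ι → ℕ) (ℋ : ∀ i, SimpleGraph (Fin (m i))) : ℕ :=
  minOrderAtGamma m ℋ - gammaFam m ℋ - 1

/-- `S'' = {v ∉ L : L ⊆ N_G(v)}`. -/
def Sdd {n : ℕ} (G : SimpleGraph (Fin n)) (L : Finset (Fin n)) : Set (Fin n) :=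
  {v | v ∉ L ∧ ∀ w ∈ L, G.Adj w v}

/-- `S' = (V ∖ L) ∖ S''`. -/
def Sd {n : ℕ} (G : SimpleGraph (Fin n)) (L : Finset (Fin n)) : Set (Fin n) :=
  {v | v ∉ L ∧ ¬ ∀ w ∈ L, G.Adj w v}

/-- `L^λ = {u : x_u ≥ (10 C)^{-λ} x_{u*}}`. -/
def Lset {n : ℕ} (x : Fin n → ℝ) (u₀ : Fin n) (C : ℝ) (lam : ℕ) : Set (Fin n) :=
  {u | ((10 * C) ^ lam)⁻¹ * x u₀ ≤ x u}

/-- `N_i(u)`: vertices at distance exactly `i` from `u`. -/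
def Nset {n : ℕ} (G : SimpleGraph (Fin n)) (u : Fin n) (i : ℕ) : Set (Fin n) :=
  {v | G.dist u v = i}

/-- `H[S] ∈ Γ_s(H)` is irreducible: `|S| = s` and no `s`-vertex induced subgraph of `H` is
isomorphic to a proper subgraph of `H[S]`. -/
def IrreducibleInduced {h : ℕ} (H : SimpleGraph (Fin h)) (s : ℕ) (S : Finset (Fin h)) : Prop :=
  S.card = s ∧
    ¬ ∃ (T : Finset (Fin h)) (B' : SimpleGraph ((S : Set (Fin h)))),
        T.card = s ∧ B' ≤ SimpleGraph.induce (S : Set (Fin h)) H ∧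
        B' ≠ SimpleGraph.induce (S : Set (Fin h)) H ∧
        Nonempty (SimpleGraph.induce (T : Set (Fin h)) H ≃g B')

/-- `Q` is `Γ(𝓗)`-subdivision-free. -/
def GammaFree (m : ι → ℕ) (ℋ : ∀ i, SimpleGraph (Fin (m i)))
    {X : Type*} (Q : SimpleGraph X) : Prop :=
  ∀ (i : ι) (S : Finset (Fin (m i))),
    IrreducibleInduced (ℋ i) (m i - gammaFam m ℋ) S →
    ¬ ContainsSubdiv Q (SimpleGraph.induce (S : Set (Fin (m i))) (ℋ i))

/-- `Q` is `Γ(𝓗)`-subdivision-saturated. -/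
def GammaSat (m : ι → ℕ) (ℋ : ∀ i, SimpleGraph (Fin (m i)))
    {X : Type*} (Q : SimpleGraph X) : Prop :=
  GammaFree m ℋ Q ∧
    ∀ u v : X, u ≠ v → ¬ Q.Adj u v →
      ∃ (i : ι) (S : Finset (Fin (m i))),
        IrreducibleInduced (ℋ i) (m i - gammaFam m ℋ) S ∧
        ContainsSubdiv (addEdge Q u v) (SimpleGraph.induce (S : Set (Fin (m i))) (ℋ i))

/-- `G` is `{H}`-subdivision-saturated (single forbidden graph). -/
def SubdivSatSingle {W V : Type*} (H : SimpleGraph W) (G : SimpleGraph V) : Prop :=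
  ¬ ContainsSubdiv G H ∧
    ∀ u v : V, u ≠ v → ¬ G.Adj u v → ContainsSubdiv (addEdge G u v) H

/-! ### Auxiliary lemmas -/

/-- Any eigenvalue of the adjacency matrix is at most `n`. -/
lemma eig_le {n : ℕ} (G : SimpleGraph (Fin n)) {t : ℝ} {x : Fin n → ℝ}
    (hx : x ≠ 0) (h : adjMat G *ᵥ x = t • x) : t ≤ n := by
  classical
  have hne : ∃ i, x i ≠ 0 := by
    by_contra hc; push_neg at hc; exact hx (funext fun i => hc i)
  obtain ⟨i0, hi0⟩ := hne
  obtain ⟨i, -, hi⟩ := Finset.exists_max_image (Finset.univ : Finset (Fin n))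
    (fun j => |x j|) ⟨i0, Finset.mem_univ _⟩
  have hxi : 0 < |x i| := lt_of_lt_of_le (abs_pos.2 hi0) (hi i0 (Finset.mem_univ _))
  have hrow := congrFun h i
  have hAbound : ∀ j, |adjMat G i j| ≤ 1 := by
    intro j
    simp only [adjMat, Matrix.of_apply]
    split <;> norm_num
  have habs : |t| * |x i| ≤ n * |x i| := by
    have h1 : |t * x i| = |∑ j, adjMat G i j * x j| := by
      have h1' : ∑ j, adjMat G i j * x j = t * x i := by
        simpa [Matrix.mulVec, dotProduct] using hrow
      rw [h1']
    have h2 : |∑ j, adjMat G i j * x j| ≤ ∑ j : Fin n, |x i| := by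
      calc |∑ j, adjMat G i j * x j| ≤ ∑ j, |adjMat G i j * x j| :=
            Finset.abs_sum_le_sum_abs _ _
        _ ≤ ∑ j : Fin n, |x i| := by
            apply Finset.sum_le_sum
            intro j _
            rw [abs_mul]
            calc |adjMat G i j| * |x j| ≤ 1 * |x j| :=
                  mul_le_mul_of_nonneg_right (hAbound j) (abs_nonneg _)
              _ = |x j| := one_mul _
              _ ≤ |x i| := hi j (Finset.mem_univ _)
    calc |t| * |x i| = |t * x i| := (abs_mul t (x i)).symm
      _ ≤ ∑ j : Fin n, |x i| := h1 ▸ h2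
      _ = n * |x i| := by
          rw [Finset.sum_const, Finset.card_univ, Fintype.card_fin, nsmul_eq_mul]
  have habs' : |t| ≤ n := le_of_mul_le_mul_right habs hxi
  exact le_trans (le_abs_self t) habs'

lemma specRad_le {n : ℕ} (G : SimpleGraph (Fin n)) : specRad G ≤ n := by
  apply Real.sSup_le
  · rintro t ⟨x, hx, hEq⟩
    exact eig_le G hx hEq
  · exact_mod_cast Nat.zero_le n

/-- A walk with distinct endpoints either is (or contains) a direct edge, or its second
vertex is internal. -/
lemma adj_or_internal {V : Type*} {G : SimpleGraph V} {a b : V} (p : G.Walk a b)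
    (hab : a ≠ b) :
    G.Adj a b ∨ ∃ s, G.Adj a s ∧ s ∈ WalkInternal p := by
  cases p with
  | nil => exact absurd rfl hab
  | @cons _ c _ h q =>
    by_cases hc : c = b
    · subst hc; exact Or.inl h
    · refine Or.inr ⟨c, h, ⟨?_, h.ne', hc⟩⟩
      simp only [SimpleGraph.Walk.support_cons, List.mem_cons]
      exact Or.inr q.start_mem_support

lemma internal_reverse {V : Type*} {G : SimpleGraph V} {a b : V} (p : G.Walk a b) :
    WalkInternal p.reverse = WalkInternal p := by
  ext w
  simp only [WalkInternal, Set.mem_setOf_eq, SimpleGraph.Walk.support_reverse,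
    List.mem_reverse]
  tauto

/-- From a subdivision of `H` in a graph all of whose edges meet `K`, extract a vertex
cover of `H` of size at most `|K|`. -/
lemma cover_of_subdiv {n h : ℕ} {G : SimpleGraph (Fin n)} {H : SimpleGraph (Fin h)}
    (K : Finset (Fin n)) (hKe : ∀ u v, G.Adj u v → u ∈ K ∨ v ∈ K)
    (hsub : ContainsSubdiv G H) :
    ∃ C : Finset (Fin h), C.card ≤ K.card ∧ ∀ u v, H.Adj u v → u ∈ C ∨ v ∈ C := by
  classical
  obtain ⟨φ, hφ, P, hpath, hsymm, hint, hdisj⟩ := hsub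
  set D : Fin h → Prop :=
    fun w => ∃ κ, κ ∈ K ∧ ∃ v, ∃ e : H.Adj w v, κ ∈ WalkInternal (P e) ∧ w ≤ v with hD
  set C : Finset (Fin h) := Finset.univ.filter (fun w => φ w ∈ K ∨ D w) with hC
  refine ⟨C, ?_, ?_⟩
  · -- injection into K
    set θ : Fin h → Fin n := fun w =>
      if _ : φ w ∈ K then φ w else if h2 : D w then h2.choose else φ w with hθ
    apply Finset.card_le_card_of_injOn θ
    · intro w hw
      rw [Finset.mem_coe, hC, Finset.mem_filter] at hw
      by_cases h1 : φ w ∈ K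
      · simp only [hθ, dif_pos h1]; exact h1
      · have h2 : D w := hw.2.resolve_left h1
        simp only [hθ, dif_neg h1, dif_pos h2]
        exact h2.choose_spec.1
    · intro w hw w' hw' hEq
      rw [Finset.mem_coe, hC, Finset.mem_filter] at hw hw'
      by_cases h1 : φ w ∈ K <;> by_cases h1' : φ w' ∈ K
      · simp only [hθ, dif_pos h1, dif_pos h1'] at hEq
        exact hφ hEq
      · have h2' : D w' := hw'.2.resolve_left h1'
        simp only [hθ, dif_pos h1, dif_neg h1', dif_pos h2'] at hEq
        obtain ⟨-, v', e', hκ', -⟩ := h2'.choose_spec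
        exact absurd ⟨w, hEq⟩ (hint e' _ hκ')
      · have h2 : D w := hw.2.resolve_left h1
        simp only [hθ, dif_neg h1, dif_pos h2, dif_pos h1'] at hEq
        obtain ⟨-, v, e, hκ, -⟩ := h2.choose_spec
        exact absurd ⟨w', hEq.symm⟩ (hint e _ hκ)
      · have h2 : D w := hw.2.resolve_left h1
        have h2' : D w' := hw'.2.resolve_left h1'
        simp only [hθ, dif_neg h1, dif_pos h2, dif_neg h1', dif_pos h2'] at hEq
        obtain ⟨-, v, e, hκ, hwv⟩ := h2.choose_spec
        obtain ⟨-, v', e', hκ', hwv'⟩ := h2'.choose_spec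
        rw [hEq] at hκ
        have hss : s(w, v) = s(w', v') := by
          by_contra hne
          have hmem : h2'.choose ∈ WalkInternal (P e) ∩ WalkInternal (P e') := ⟨hκ, hκ'⟩
          rw [hdisj e e' hne] at hmem
          exact hmem
        rcases Sym2.eq_iff.1 hss with ⟨h3, h4⟩ | ⟨h3, h4⟩
        · exact h3
        · subst h3; subst h4
          exact le_antisymm hwv hwv'
  · -- vertex cover
    intro u v huv
    have hne : φ u ≠ φ v := fun hh => huv.ne (hφ hh)
    have hmemC : ∀ w : Fin h, (φ w ∈ K ∨ D w) → w ∈ C := by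
      intro w hw; rw [hC, Finset.mem_filter]; exact ⟨Finset.mem_univ _, hw⟩
    rcases adj_or_internal (P huv) hne with hadj | ⟨s, hadj, hsint⟩
    · rcases hKe _ _ hadj with hk | hk
      · exact Or.inl (hmemC u (Or.inl hk))
      · exact Or.inr (hmemC v (Or.inl hk))
    · rcases hKe _ _ hadj with hk | hk
      · exact Or.inl (hmemC u (Or.inl hk))
      · by_cases hle : u ≤ v
        · exact Or.inl (hmemC u (Or.inr ⟨s, hk, v, huv, hsint, hle⟩))
        · refine Or.inr (hmemC v (Or.inr ⟨s, hk, u, huv.symm, ?_, le_of_not_ge hle⟩))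
          rw [hsymm huv, internal_reverse]
          exact hsint

lemma indep_card_le {V : Type*} [Fintype V] (G : SimpleGraph V) (s : Finset V)
    (hs : IsIndep G ↑s) : s.card ≤ indepNum G := by
  apply le_csSup
  · refine ⟨Fintype.card V, ?_⟩
    rintro k ⟨t, -, ht⟩
    exact ht ▸ (Finset.card_le_univ t).trans_eq (Finset.card_univ)
  · exact ⟨s, hs, rfl⟩

lemma free_of_cover {ι : Type*} (m : ι → ℕ) (ℋ : ∀ i, SimpleGraph (Fin (m i)))
    (hγ : 1 ≤ gammaFam m ℋ) {n : ℕ} {G : SimpleGraph (Fin n)} (K : Finset (Fin n))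
    (hKe : ∀ u v, G.Adj u v → u ∈ K ∨ v ∈ K) (hK : K.card = gammaFam m ℋ) :
    SubdivFreeFam m ℋ G := by
  classical
  intro i hsub
  obtain ⟨C, hCcard, hcov⟩ := cover_of_subdiv K hKe hsub
  have hindep : IsIndep (ℋ i) ↑(Finset.univ \ C) := by
    intro u hu v hv _ hadj
    rw [Finset.mem_coe, Finset.mem_sdiff] at hu hv
    rcases hcov u v hadj with hc | hc
    · exact hu.2 hc
    · exact hv.2 hc
  have h1 : (Finset.univ \ C).card ≤ indepNum (ℋ i) := indep_card_le _ _ hindep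
  have h2 : (Finset.univ \ C).card = m i - C.card := by
    rw [Finset.card_sdiff_of_subset (Finset.subset_univ _), Finset.card_univ, Fintype.card_fin]
  have h3 : gammaFam m ℋ ≤ gammaOf (ℋ i) := Nat.sInf_le ⟨i, rfl⟩
  have h4 : gammaOf (ℋ i) = m i - indepNum (ℋ i) - 1 := by
    rw [gammaOf, Fintype.card_fin]
  omega

lemma card_filter_lt (n a : ℕ) (h : a ≤ n) :
    (Finset.univ.filter (fun u : Fin n => (u : ℕ) < a)).card = a := by
  have heq : Finset.univ.filter (fun u : Fin n => (u : ℕ) < a) =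
      Finset.image (Fin.castLE h) Finset.univ := by
    ext u
    simp only [Finset.mem_filter, Finset.mem_univ, true_and, Finset.mem_image]
    constructor
    · intro hu; exact ⟨⟨u, hu⟩, rfl⟩
    · rintro ⟨j, rfl⟩; exact j.isLt
  rw [heq, Finset.card_image_of_injective _ (Fin.castLE_injective h), Finset.card_univ,
    Fintype.card_fin]

theorem statement4 {ι : Type*} [Fintype ι] [Nonempty ι]
    (m : ι → ℕ) (ℋ : ∀ i, SimpleGraph (Fin (m i)))
    (hγ : 1 ≤ gammaFam m ℋ)
    (n : ℕ) (hn0 : 1 ≤ n) (hn : gammaFam m ℋ ≤ n) :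
    Real.sqrt ((gammaFam m ℋ * (n - gammaFam m ℋ) : ℕ) : ℝ) ≤ spex n m ℋ := by
  classical
  set a := gammaFam m ℋ with ha
  set G : SimpleGraph (Fin n) :=
    SimpleGraph.fromRel (fun u v => (u : ℕ) < a ∧ ¬ (v : ℕ) < a) with hG
  set K : Finset (Fin n) := Finset.univ.filter (fun u : Fin n => (u : ℕ) < a) with hK
  have hKcard : K.card = a := card_filter_lt n a hn
  have hKe : ∀ u v, G.Adj u v → u ∈ K ∨ v ∈ K := by
    intro u v huv
    rw [hG, SimpleGraph.fromRel_adj] at huv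
    rcases huv.2 with ⟨h1, -⟩ | ⟨h1, -⟩
    · left; rw [hK, Finset.mem_filter]; exact ⟨Finset.mem_univ _, h1⟩
    · right; rw [hK, Finset.mem_filter]; exact ⟨Finset.mem_univ _, h1⟩
  have hfree : SubdivFreeFam m ℋ G := free_of_cover m ℋ hγ K hKe hKcard
  -- step 1: exhibit the eigenvalue
  have hkey : ∃ x : Fin n → ℝ, x ≠ 0 ∧
      adjMat G *ᵥ x = (Real.sqrt ((a * (n - a) : ℕ) : ℝ)) • x := by
    by_cases hb0 : n - a = 0
    · -- G has no edges; eigenvalue 0 with constant vector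
      have hna : n = a := by omega
      have hnoadj : ∀ u v : Fin n, ¬ G.Adj u v := by
        intro u v huv
        rw [hG, SimpleGraph.fromRel_adj] at huv
        rcases huv.2 with ⟨-, h2⟩ | ⟨-, h2⟩
        · exact h2 (hna ▸ v.isLt)
        · exact h2 (hna ▸ u.isLt)
      refine ⟨fun _ => 1, ?_, ?_⟩
      · intro h0
        have := congrFun h0 ⟨0, hn0⟩
        norm_num at this
      · funext u
        have hz : ∀ v : Fin n, adjMat G u v = 0 := by
          intro v; simp [adjMat, hnoadj u v]
        simp [Matrix.mulVec, dotProduct, hz, hb0]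
    · -- bipartite eigenvector
      set b : ℕ := n - a with hb
      have hb1 : 1 ≤ b := Nat.one_le_iff_ne_zero.2 hb0
      have han : a < n := by omega
      set x : Fin n → ℝ :=
        fun u => if (u : ℕ) < a then Real.sqrt b else Real.sqrt a with hx
      have ha0 : (0 : ℝ) ≤ (a : ℝ) := Nat.cast_nonneg a
      have hb0' : (0 : ℝ) ≤ (b : ℝ) := Nat.cast_nonneg b
      have hcast : ((a * (n - a) : ℕ) : ℝ) = (a : ℝ) * (b : ℝ) := by
        push_cast [← hb]; ring
      have hcard2 :
          (Finset.univ.filter (fun v : Fin n => ¬ (v : ℕ) < a)).card = b := by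
        have h5 := Finset.card_filter_add_card_filter_not
          (s := (Finset.univ : Finset (Fin n))) (p := fun v : Fin n => (v : ℕ) < a)
        rw [Finset.card_univ, Fintype.card_fin, card_filter_lt n a hn] at h5
        omega
      refine ⟨x, ?_, ?_⟩
      · intro h0
        have h6 := congrFun h0 ⟨0, hn0⟩
        have h7 : ((⟨0, hn0⟩ : Fin n) : ℕ) < a := hγ
        rw [hx] at h6
        simp only [if_pos h7, Pi.zero_apply] at h6
        have : (0:ℝ) < Real.sqrt b := Real.sqrt_pos.2 (by exact_mod_cast hb1)
        exact this.ne' h6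
      · funext u
        rw [hcast]
        simp only [Matrix.mulVec, dotProduct, Pi.smul_apply, smul_eq_mul]
        by_cases hu : (u : ℕ) < a
        · have hterm : ∀ v : Fin n,
              adjMat G u v * x v = if (v : ℕ) < a then 0 else Real.sqrt a := by
            intro v
            by_cases hv : (v : ℕ) < a
            · have hadj : ¬ G.Adj u v := by
                rw [hG, SimpleGraph.fromRel_adj]
                rintro ⟨-, ⟨-, h2⟩ | ⟨-, h2⟩⟩ <;> [exact h2 hv; exact h2 hu]
              simp [adjMat, hadj, hv]
            · have hneq : u ≠ v := by
                intro hEq; exact hv (hEq ▸ hu)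
              have hadj : G.Adj u v := by
                rw [hG, SimpleGraph.fromRel_adj]
                exact ⟨hneq, Or.inl ⟨hu, hv⟩⟩
              simp [adjMat, hadj, hv, hx]
          rw [Finset.sum_congr rfl (fun v _ => hterm v), Finset.sum_ite,
            Finset.sum_const, Finset.sum_const, hcard2]
          simp only [smul_zero, zero_add, nsmul_eq_mul]
          rw [hx]
          simp only [if_pos hu]
          rw [Real.sqrt_mul ha0, mul_assoc, Real.mul_self_sqrt hb0', mul_comm]
        · have hterm : ∀ v : Fin n,
              adjMat G u v * x v = if (v : ℕ) < a then Real.sqrt b else 0 := by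
            intro v
            by_cases hv : (v : ℕ) < a
            · have hneq : u ≠ v := by
                intro hEq; exact hu (hEq ▸ hv)
              have hadj : G.Adj u v := by
                rw [hG, SimpleGraph.fromRel_adj]
                exact ⟨hneq, Or.inr ⟨hv, hu⟩⟩
              simp [adjMat, hadj, hv, hx]
            · have hadj : ¬ G.Adj u v := by
                rw [hG, SimpleGraph.fromRel_adj]
                rintro ⟨-, ⟨h1, -⟩ | ⟨h1, -⟩⟩ <;> [exact hu h1; exact hv h1]
              simp [adjMat, hadj, hv]
          rw [Finset.sum_congr rfl (fun v _ => hterm v), Finset.sum_ite,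
            Finset.sum_const, Finset.sum_const, card_filter_lt n a hn]
          simp only [smul_zero, add_zero, nsmul_eq_mul]
          rw [hx]
          simp only [if_neg hu]
          rw [mul_comm (a:ℝ) (b:ℝ), Real.sqrt_mul hb0', mul_assoc,
            Real.mul_self_sqrt ha0, mul_comm]
  obtain ⟨x, hxne, hEig⟩ := hkey
  have hle1 : Real.sqrt ((a * (n - a) : ℕ) : ℝ) ≤ specRad G := by
    apply le_csSup
    · refine ⟨(n : ℝ), ?_⟩
      rintro t ⟨y, hy, hy2⟩
      exact eig_le G hy hy2
    · exact ⟨x, hxne, hEig⟩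
  have hle2 : specRad G ≤ spex n m ℋ := by
    apply le_csSup
    · refine ⟨(n : ℝ), ?_⟩
      rintro ρ ⟨G', -, rfl⟩
      exact specRad_le G'
    · exact ⟨G, hfree, rfl⟩
  exact hle1.trans hle2

end SubdivPaper
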